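/- For j ≥ 1, let ω = ω'·(10)^j be a binary word avoiding the factor (10)^j1 with endpoint at ordinate k ≥ 2. Then for all 1 ≤ h ≤ j and 2 ≤ m ≤ k, the word ω'·(10)^{h-1}·1·0^m·(10)^j avoids the factor (10)^j1. -/

import Mathlib

/-- The pattern `(10)^j 1` (`true` = 1 / up step, `false` = 0 / down step). -/
def pat (j : ℕ) : List Bool := (List.replicate j [true, false]).flatten ++ [true]

/-- `(10)^j`. -/
def alt (j : ℕ) : List Bool := (List.replicate j [true, false]).flatten

def ht (w : List Bool) : ℤ := (w.count true : ℤ) - (w.count false : ℤ)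

lemma pat_succ (j : ℕ) : pat (j + 1) = true :: false :: pat j := by
  unfold pat
  rw [List.replicate_succ, List.flatten_cons]
  rfl

lemma alt_succ' (h : ℕ) : alt (h + 1) = alt h ++ [true, false] := by
  unfold alt
  rw [List.replicate_succ', List.flatten_append]
  rfl

lemma alt_add (a b : ℕ) : alt (a + b) = alt a ++ alt b := by
  unfold alt
  rw [List.replicate_add, List.flatten_append]

lemma pat_length (j : ℕ) : (pat j).length = 2 * j + 1 := by
  simp [pat]; ring

lemma alt_length (j : ℕ) : (alt j).length = 2 * j := by
  simp [alt]; ring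

lemma pat_getElem? (j : ℕ) : ∀ n, n < 2 * j + 1 →
    (pat j)[n]? = some (decide (n % 2 = 0)) := by
  induction j with
  | zero =>
    intro n hn
    interval_cases n
    simp [pat]
  | succ j ih =>
    intro n hn
    rw [pat_succ]
    match n with
    | 0 => simp
    | 1 => simp
    | (n + 2) =>
      simp only [List.getElem?_cons_succ]
      have h2 : (n + 2) % 2 = n % 2 := Nat.add_mod_right n 2
      rw [h2, ih n (by omega)]

lemma pat_getElem (j : ℕ) (n : ℕ) (hn : n < (pat j).length) :
    (pat j)[n] = decide (n % 2 = 0) := by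
  have h1 := pat_getElem? j n (by rw [← pat_length j]; exact hn)
  rw [List.getElem?_eq_getElem hn] at h1
  exact Option.some_injective _ h1

/-- Key splitting lemma: an alternating word inside `A ++ 0^m ++ B` with `m ≥ 2`
must lie inside `A ++ [0]` or inside `[0] ++ B`. -/
lemma key (A B p : List Bool) (m : ℕ) (hm : 2 ≤ m) (hp : 2 ≤ p.length)
    (halt : ∀ n (hn : n < p.length), p[n] = decide (n % 2 = 0))
    (hinf : p <:+: A ++ (List.replicate m false ++ B)) :
    p <:+: A ++ [false] ∨ p <:+: false :: B := by
  obtain ⟨s, t, hw⟩ := hinf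
  set W : List Bool := A ++ (List.replicate m false ++ B) with hWdef
  have hWlen : W.length = A.length + (m + B.length) := by simp [hWdef]
  have hWlen' : s.length + p.length + t.length = W.length := by
    have := congrArg List.length hw
    simp only [List.length_append] at this
    omega
  rcases le_or_gt (s.length + p.length) (A.length + 1) with hc1 | hc1'
  · -- p lies within A ++ [false]
    left
    have hsp : s ++ p <+: W := ⟨t, hw⟩
    have htake : s ++ p = List.take (s.length + p.length) W := by
      have := List.prefix_iff_eq_take.mp hsp
      simpa using this
    have hpref : s ++ p <+: List.take (A.length + 1) W := by
      rw [htake]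
      have heq : List.take (s.length + p.length) W
          = List.take (s.length + p.length) (List.take (A.length + 1) W) := by
        rw [List.take_take, Nat.min_eq_left hc1]
      rw [heq]
      exact List.take_prefix _ _
    have hfalse : List.take (A.length + 1) W = A ++ [false] := by
      rw [hWdef, List.take_length_add_append 1]
      congr 1
      obtain ⟨m', rfl⟩ : ∃ m', m = m' + 2 := ⟨m - 2, by omega⟩
      simp [List.replicate_succ]
    rw [hfalse] at hpref
    exact ((List.suffix_append s p).isInfix).trans hpref.isInfix
  rcases le_or_gt (A.length + m - 1) s.length with hc2 | hc2'
  · -- p lies within [false] ++ B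
    right
    have hdropW : p ++ t = List.drop s.length W := by
      rw [← hw, List.append_assoc, List.drop_left]
    have hsuf2 : p ++ t <:+ List.drop (A.length + (m - 1)) W := by
      rw [hdropW]
      have hs : s.length = (A.length + (m - 1)) + (s.length - (A.length + (m - 1))) := by
        omega
      rw [hs, ← List.drop_drop]
      exact List.drop_suffix _ _
    have hdropval : List.drop (A.length + (m - 1)) W = false :: B := by
      rw [hWdef, List.drop_length_add_append]
      have hrep : List.replicate m (false : Bool)
          = List.replicate (m - 1) false ++ [false] := by
        rw [← List.replicate_succ']
        congr 1
        omega
      rw [hrep, List.append_assoc,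
        List.drop_left' (by simp : (List.replicate (m - 1) (false : Bool)).length = m - 1)]
      rfl
    rw [hdropval] at hsuf2
    exact ((List.prefix_append p t).isInfix).trans hsuf2.isInfix
  · -- middle case: p would contain two consecutive `false`s, contradicting `halt`
    exfalso
    set i := max s.length A.length with hi
    have hia : A.length ≤ i := le_max_right _ _
    have his : s.length ≤ i := le_max_left _ _
    have hi1 : i + 1 < A.length + m := by omega
    have hi2 : i + 1 - s.length < p.length := by omega
    have hiW : i < W.length := by omega
    have hi1W : i + 1 < W.length := by omega
    have hWi : ∀ q, A.length ≤ q → q < A.length + m →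
        ∀ (hq : q < W.length), W[q] = false := by
      intro q hq1 hq2 hq
      have hq' : q < (A ++ (List.replicate m false ++ B)).length := hq
      have e : W[q]'hq = (A ++ (List.replicate m false ++ B))[q]'hq' := rfl
      rw [e, List.getElem_append_right hq1]
      have hq3 : q - A.length < (List.replicate m (false : Bool)).length := by
        simp; omega
      rw [List.getElem_append_left hq3]
      exact List.getElem_replicate _
    have hPi : ∀ q (hq1 : s.length ≤ q) (hq2 : q - s.length < p.length)
        (hq : q < W.length), W[q] = p[q - s.length]'hq2 := by
      intro q hq1 hq2 hq
      have hq' : q < (s ++ (p ++ t)).length := by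
        simp only [List.length_append]; omega
      have e : W[q]'hq = (s ++ (p ++ t))[q]'hq' := by
        congr 1
        rw [← hw, List.append_assoc]
      rw [e, List.getElem_append_right hq1]
      exact List.getElem_append_left hq2
    have e1 : p[i - s.length]'(by omega) = false := by
      rw [← hPi i his (by omega) hiW]
      exact hWi i hia (by omega) hiW
    have e2 : p[i + 1 - s.length]'(by omega) = false := by
      rw [← hPi (i + 1) (by omega) hi2 hi1W]
      exact hWi (i + 1) (by omega) hi1 hi1W
    rw [halt] at e1 e2
    simp only [decide_eq_false_iff_not] at e1 e2
    omega

theorem stmt14 (j : ℕ) (hj : 1 ≤ j) (ω ω' : List Bool) (k : ℤ)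
    (hdec : ω = ω' ++ alt j)
    (havoid : ¬ pat j <:+: ω)
    (hend : ht ω = k) (hk : 2 ≤ k) :
    ∀ (h m : ℕ), 1 ≤ h → h ≤ j → 2 ≤ m → (m : ℤ) ≤ k →
      ¬ pat j <:+: (ω' ++ alt (h - 1) ++ [true] ++ List.replicate m false ++ alt j) := by
  intro h m hh1 hhj hm2 hmk hinf
  set A : List Bool := ω' ++ alt (h - 1) ++ [true] with hA
  have hW : ω' ++ alt (h - 1) ++ [true] ++ List.replicate m false ++ alt j
      = A ++ (List.replicate m false ++ alt j) := by
    simp [hA, List.append_assoc]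
  rw [hW] at hinf
  have hp2 : 2 ≤ (pat j).length := by rw [pat_length]; omega
  rcases key A (alt j) (pat j) m hm2 hp2 (pat_getElem j) hinf with hcase | hcase
  · -- pat j infix of A ++ [false] = ω' ++ alt h, a prefix of ω
    have hAalt : A ++ [false] = ω' ++ alt h := by
      obtain ⟨h', rfl⟩ : ∃ h', h = h' + 1 := ⟨h - 1, by omega⟩
      rw [alt_succ']
      simp [hA]
    rw [hAalt] at hcase
    apply havoid
    rw [hdec]
    have hp : ω' ++ alt h <+: ω' ++ alt j := by
      obtain ⟨d, rfl⟩ : ∃ d, j = h + d := ⟨j - h, by omega⟩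
      rw [alt_add]
      exact ⟨alt d, by simp [List.append_assoc]⟩
    exact hcase.trans hp.isInfix
  · -- pat j infix of false :: alt j; lengths force equality, impossible heads
    have heq : pat j = false :: alt j := by
      apply hcase.sublist.eq_of_length
      simp [pat_length, alt_length]
    obtain ⟨j', rfl⟩ : ∃ j', j = j' + 1 := ⟨j - 1, by omega⟩
    rw [pat_succ] at heq
    simp at heq
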